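/- Bob-to-Alice signalling correlations yield invalid conditional distributions (Appendix A claim): Let P : Fin X → Fin Y → Fin A → Fin B → ℝ satisfy P x y a b ≥ 0 and ∑_{a,b} P x y a b = 1 for all x,y, and suppose P is signalling from Bob to Alice: there exist x* ∈ Fin X, a ∈ Fin A, and y', y'' ∈ Fin Y with ∑_b P x* y' a b ≠ ∑_b P x* y'' a b. Then there exist T ≥ 1, a classical channel 𝒯 on Fin T, and conditional probability distributions p(x|m) (with m ∈ Fin X), p_e(τ|a,m), p(y|τ'), p_d(n|τ',b) (with n ∈ Fin B) such that the function 𝒩 m n := ∑_{a,b,x,y,τ,τ'} p(x|m)·p_e(τ|a,m)·P x y a b·𝒯 τ' τ·p(y|τ')·p_d(n|τ',b) satisfies ∑_n 𝒩 m n > 1 for some m ∈ Fin X. -/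

import Mathlib

open Finset

/-- Bob-to-Alice signalling correlations yield invalid conditional distributions
(Appendix A claim). Here Alice's input set is `Fin X` and Bob's output set is
`Fin B`. -/
theorem signalling_yields_invalid_distribution
    (X Y A B : ℕ)
    (P : Fin X → Fin Y → Fin A → Fin B → ℝ)
    (hP0 : ∀ x y a b, 0 ≤ P x y a b)
    (hP1 : ∀ x y, ∑ a : Fin A, ∑ b : Fin B, P x y a b = 1)
    (hsig : ∃ (x : Fin X) (a : Fin A) (y' y'' : Fin Y),
      ∑ b : Fin B, P x y' a b ≠ ∑ b : Fin B, P x y'' a b) :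
    ∃ (T : ℕ) (_ : 1 ≤ T) (𝒯 : Fin T → Fin T → ℝ)
      (px : Fin X → Fin X → ℝ) (pe : Fin T → Fin A → Fin X → ℝ)
      (py : Fin Y → Fin T → ℝ) (pd : Fin B → Fin T → Fin B → ℝ),
      (∀ τ' τ, 0 ≤ 𝒯 τ' τ) ∧ (∀ τ, ∑ τ' : Fin T, 𝒯 τ' τ = 1) ∧
      (∀ x m, 0 ≤ px x m) ∧ (∀ m, ∑ x : Fin X, px x m = 1) ∧
      (∀ τ a m, 0 ≤ pe τ a m) ∧ (∀ a m, ∑ τ : Fin T, pe τ a m = 1) ∧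
      (∀ y τ', 0 ≤ py y τ') ∧ (∀ τ', ∑ y : Fin Y, py y τ' = 1) ∧
      (∀ n τ' b, 0 ≤ pd n τ' b) ∧ (∀ τ' b, ∑ n : Fin B, pd n τ' b = 1) ∧
      ∃ m : Fin X,
        (∑ n : Fin B,
          ∑ a : Fin A, ∑ b : Fin B, ∑ x : Fin X, ∑ y : Fin Y,
            ∑ τ : Fin T, ∑ τ' : Fin T,
              px x m * pe τ a m * P x y a b * 𝒯 τ' τ * py y τ' * pd n τ' b) > 1 := by
  classical
  obtain ⟨x₀, a₀, y', y'', hne⟩ := hsig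
  set M : Fin Y → Fin A → ℝ := fun y a => ∑ b : Fin B, P x₀ y a b with hM
  have hMsum : ∀ y : Fin Y, ∑ a : Fin A, M y a = 1 := fun y => hP1 x₀ y
  set σ : Fin A → Fin Y := fun a => if M y' a ≤ M y'' a then y'' else y' with hσ
  have hσge : ∀ a, M y' a ≤ M (σ a) a ∧ M y'' a ≤ M (σ a) a := by
    intro a
    by_cases h : M y' a ≤ M y'' a <;> simp [hσ, h]
    exact le_of_not_ge h
  have hY : 0 < Y := y'.pos
  refine ⟨Y, hY, fun τ' τ => if τ' = τ then 1 else 0,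
    fun x m => if x = m then 1 else 0,
    fun τ a _ => if τ = σ a then 1 else 0,
    fun y τ' => if y = τ' then 1 else 0,
    fun n _ b => if n = b then 1 else 0,
    ?_, ?_, ?_, ?_, ?_, ?_, ?_, ?_, ?_, ?_, x₀, ?_⟩
  · intro τ' τ; positivity
  · intro τ; simp
  · intro x m; positivity
  · intro m; simp
  · intro τ a m; positivity
  · intro a m; simp
  · intro y τ'; positivity
  · intro τ'; simp
  · intro n τ' b; positivity
  · intro τ' b; simp
  · have hsimp : (∑ n : Fin B,
          ∑ a : Fin A, ∑ b : Fin B, ∑ x : Fin X, ∑ y : Fin Y,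
            ∑ τ : Fin Y, ∑ τ' : Fin Y,
              (if x = x₀ then (1:ℝ) else 0) * (if τ = σ a then 1 else 0) *
                P x y a b * (if τ' = τ then 1 else 0) * (if y = τ' then 1 else 0) *
                (if n = b then 1 else 0))
        = ∑ a : Fin A, M (σ a) a := by
      rw [Finset.sum_comm]
      refine Finset.sum_congr rfl fun a _ => ?_
      rw [hM]
      rw [Finset.sum_comm (γ := Fin B)]
      refine Finset.sum_congr rfl fun b _ => ?_
      simp [mul_ite, ite_mul, Finset.sum_ite_eq, Finset.sum_ite_eq']
    rw [hsimp]
    rcases lt_or_gt_of_ne hne with h | h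
    · calc (1:ℝ) = ∑ a : Fin A, M y' a := (hMsum y').symm
        _ < ∑ a : Fin A, M (σ a) a := by
          refine Finset.sum_lt_sum (fun a _ => (hσge a).1) ⟨a₀, Finset.mem_univ _, ?_⟩
          have : σ a₀ = y'' := by simp [hσ, hM, le_of_lt h]
          rw [this]; exact h
    · calc (1:ℝ) = ∑ a : Fin A, M y'' a := (hMsum y'').symm
        _ < ∑ a : Fin A, M (σ a) a := by
          refine Finset.sum_lt_sum (fun a _ => (hσge a).2) ⟨a₀, Finset.mem_univ _, ?_⟩
          have : σ a₀ = y' := by simp [hσ, hM, not_le.mpr h]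
          rw [this]; exact h
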